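/- Let z : [1, ∞) → Δ(A) be absolutely continuous with ż(t) = (1/t)(q̄(t) − z(t)) for a.e. t, where q̄(t) = q_1(t) ⊗ q_2(t) and q_1(t) ∈ Δ(A_1) is a best reply of player 1 to z_2(t) (no assumption on q_2). Then player 1's maximal regret max_{k} u_1(k, z_2(t)) − u_1(z(t)) converges to 0 as t → ∞. -/

import Mathlib

open Finset MeasureTheory Filter Set intervalIntegral
open scoped Topology ENNReal NNReal

lemma aux_intInt {f : ℝ → ℝ} (hm : AEStronglyMeasurable f volume) {C : ℝ}
    (hb : ∀ s, |f s| ≤ C) (x y : ℝ) : IntervalIntegrable f volume x y := by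
  rw [intervalIntegrable_iff]
  refine Integrable.mono' (g := fun _ => C) ?_ (hm.restrict) ?_
  · refine integrableOn_const ?_
    rw [Set.uIoc]
    rw [Real.volume_Ioc]
    exact ENNReal.ofReal_ne_top
  · exact Filter.Eventually.of_forall fun s => by simpa [Real.norm_eq_abs] using hb s

lemma aux_locInt {f : ℝ → ℝ} (hm : AEStronglyMeasurable f volume) {C : ℝ}
    (hb : ∀ s, |f s| ≤ C) : LocallyIntegrable f volume := by
  intro x
  refine ⟨Set.Icc (x - 1) (x + 1), Icc_mem_nhds (by linarith) (by linarith), ?_⟩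
  have := (aux_intInt hm hb (x - 1) (x + 1))
  rw [intervalIntegrable_iff_integrableOn_Icc_of_le (by linarith)] at this
  exact this

lemma aux_sup_mul {ι : Type*} [Fintype ι] [Nonempty ι] (f : ι → ℝ) {c : ℝ} (hc : 0 ≤ c) :
    Finset.univ.sup' Finset.univ_nonempty (fun k => c * f k)
      = c * Finset.univ.sup' Finset.univ_nonempty f := by
  apply le_antisymm
  · refine Finset.sup'_le _ _ fun k _ => ?_
    exact mul_le_mul_of_nonneg_left (Finset.le_sup' f (Finset.mem_univ k)) hc
  · obtain ⟨k, -, hk⟩ := Finset.exists_mem_eq_sup' (Finset.univ_nonempty (α := ι)) f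
    rw [hk]
    exact Finset.le_sup' (fun k => c * f k) (Finset.mem_univ k)

lemma aux_const {f : ℝ → ℝ} {K : NNReal} (hf : LipschitzWith K f)
    (hd : ∀ᵐ x : ℝ, HasDerivAt f 0 x) (x y : ℝ) : f x = f y := by
  set s : Set ℝ := {x | HasDerivAt f 0 x} with hs
  have hsc : volume sᶜ = 0 := by
    have := MeasureTheory.ae_iff.1 hd
    simpa [hs, Set.compl_setOf] using this
  -- image of s is null
  have h1 : volume (f '' s) = 0 := by
    apply addHaar_image_eq_zero_of_det_fderivWithin_eq_zero (μ := volume)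
      (f' := fun _ => (0 : ℝ →L[ℝ] ℝ))
    · intro t ht
      have h' : HasFDerivAt f (0 : ℝ →L[ℝ] ℝ) t := by
        have h2 := (ht : HasDerivAt f 0 t).hasFDerivAt
        simpa using h2
      exact h'.hasFDerivWithinAt
    · intro t ht
      simp [ContinuousLinearMap.det]
  -- image of the complement is null (Lipschitz maps null sets to null sets)
  have h2 : volume (f '' sᶜ) = 0 := by
    have h3 := hf.hausdorffMeasure_image_le (d := 1) (by norm_num) sᶜ
    rw [MeasureTheory.hausdorffMeasure_real] at h3
    apply le_antisymm _ (zero_le)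
    calc volume (f '' sᶜ) ≤ (K : ℝ≥0∞) ^ (1:ℝ) * volume sᶜ := h3
    _ = 0 := by rw [hsc, mul_zero]
  -- the image of any interval is null
  have h3 : volume (f '' Set.uIcc x y) = 0 := by
    refine measure_mono_null ?_ (measure_union_null h1 h2)
    rw [← Set.image_union, Set.union_compl_self]
    exact Set.image_mono (Set.subset_univ _)
  -- but the image contains uIcc (f x) (f y) by IVT
  have h4 : Set.uIcc (f x) (f y) ⊆ f '' Set.uIcc x y :=
    intermediate_value_uIcc (hf.continuous.continuousOn)
  have h5 : volume (Set.uIcc (f x) (f y)) = 0 := measure_mono_null h4 h3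
  rw [Set.uIcc, Real.volume_Icc] at h5
  rw [ENNReal.ofReal_eq_zero] at h5
  have h7 := max_sub_min_eq_abs (f x) (f y)
  have h8 : |f y - f x| ≤ 0 := by rw [← h7]; simpa using h5
  have h9 := abs_nonpos_iff.1 h8
  linarith

lemma aux_ae_hasDerivAt {f : ℝ → ℝ} (hm : AEStronglyMeasurable f volume) {C : ℝ}
    (hb : ∀ s, |f s| ≤ C) :
    ∀ᵐ x : ℝ, HasDerivAt (fun t => ∫ s in (1:ℝ)..t, f s) (f x) x := by
  have hli : LocallyIntegrable f volume := aux_locInt hm hb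
  have hII : ∀ x y : ℝ, IntervalIntegrable f volume x y := aux_intInt hm hb
  set F : ℝ → ℝ := fun t => ∫ s in (1:ℝ)..t, f s with hF
  have hv := (IsUnifLocDoublingMeasure.vitaliFamily (volume : Measure ℝ)
      1).ae_tendsto_average_norm_sub hli
  filter_upwards [hv] with x hx
  have key : ∀ u v : ℝ, u < v →
      ‖(∫ s in u..v, f s) - (v - u) * f x‖ ≤ (v - u) * ⨍ s in Icc u v, ‖f s - f x‖ := by
    intro u v huv
    have h1 : (∫ s in u..v, f s) - (v - u) * f x = ∫ s in u..v, (f s - f x) := by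
      rw [intervalIntegral.integral_sub (hII u v) intervalIntegrable_const,
        intervalIntegral.integral_const, smul_eq_mul]
    have h2 : ‖∫ s in u..v, (f s - f x)‖ ≤ ∫ s in Icc u v, ‖f s - f x‖ := by
      rw [MeasureTheory.integral_Icc_eq_integral_Ioc, ← intervalIntegral.integral_of_le huv.le]
      exact intervalIntegral.norm_integral_le_integral_norm huv.le
    have h3 : ∫ s in Icc u v, ‖f s - f x‖ = (v - u) * ⨍ s in Icc u v, ‖f s - f x‖ := by
      rw [MeasureTheory.setAverage_eq, Real.volume_real_Icc_of_le huv.le, smul_eq_mul]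
      field_simp
      rw [mul_div_cancel_right₀ _ (show v - u ≠ 0 by intro h; linarith [sub_eq_zero.1 h])]
    rw [h1]
    calc ‖∫ s in u..v, (f s - f x)‖ ≤ ∫ s in Icc u v, ‖f s - f x‖ := h2
    _ = (v - u) * ⨍ s in Icc u v, ‖f s - f x‖ := h3
  have hr : Tendsto (fun y => ⨍ s in Icc x y, ‖f s - f x‖) (𝓝[>] x) (𝓝 0) :=
    hx.comp (Real.tendsto_Icc_vitaliFamily_right x)
  have hl : Tendsto (fun y => ⨍ s in Icc y x, ‖f s - f x‖) (𝓝[<] x) (𝓝 0) :=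
    hx.comp (Real.tendsto_Icc_vitaliFamily_left x)
  rw [hasDerivAt_iff_tendsto_slope, ← nhdsLT_sup_nhdsGT, tendsto_sup]
  constructor
  · -- left limit
    rw [← tendsto_sub_nhds_zero_iff]
    apply squeeze_zero_norm' ?_ hl
    filter_upwards [self_mem_nhdsWithin] with y (hy : y ∈ Iio x)
    have hxy : y < x := hy
    have hne : x - y ≠ 0 := by intro h; linarith [sub_eq_zero.1 h]
    have hFyx : F x - F y = ∫ s in y..x, f s := integral_interval_sub_left (hII 1 x) (hII 1 y)
    have e1 : slope F x y - f x = ((F x - F y) - (x - y) * f x) / (x - y) := by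
      rw [slope_comm, slope_def_field]
      field_simp
    rw [e1, hFyx, norm_div, Real.norm_eq_abs (x - y), abs_of_pos (by linarith),
      div_le_iff₀ (by linarith)]
    calc ‖(∫ s in y..x, f s) - (x - y) * f x‖
        ≤ (x - y) * ⨍ s in Icc y x, ‖f s - f x‖ := key y x hxy
    _ = (⨍ s in Icc y x, ‖f s - f x‖) * (x - y) := by ring
  · -- right limit
    rw [← tendsto_sub_nhds_zero_iff]
    apply squeeze_zero_norm' ?_ hr
    filter_upwards [self_mem_nhdsWithin] with y (hy : y ∈ Ioi x)
    have hxy : x < y := hy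
    have hne : y - x ≠ 0 := by intro h; linarith [sub_eq_zero.1 h]
    have hFyx : F y - F x = ∫ s in x..y, f s := integral_interval_sub_left (hII 1 y) (hII 1 x)
    have e1 : slope F x y - f x = ((F y - F x) - (y - x) * f x) / (y - x) := by
      rw [slope_def_field]
      field_simp
    rw [e1, hFyx, norm_div, Real.norm_eq_abs (y - x), abs_of_pos (by linarith),
      div_le_iff₀ (by linarith)]
    calc ‖(∫ s in x..y, f s) - (y - x) * f x‖
        ≤ (y - x) * ⨍ s in Icc x y, ‖f s - f x‖ := key x y hxy
    _ = (⨍ s in Icc x y, ‖f s - f x‖) * (y - x) := by ring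

lemma aux_parts {g : ℝ → ℝ} (hgI : ∀ T, 1 ≤ T → IntervalIntegrable g volume 1 T) :
    ∀ t, 1 ≤ t → t * (∫ s in (1:ℝ)..t, g s)
      = (∫ s in (1:ℝ)..t, (∫ u in (1:ℝ)..s, g u)) + ∫ s in (1:ℝ)..t, s * g s := by
  have hgI' : ∀ x y, 1 ≤ x → 1 ≤ y → IntervalIntegrable g volume x y := fun x y hx hy =>
    (hgI x hx).symm.trans (hgI y hy)
  set F : ℝ → ℝ := fun r => ∫ s in (1:ℝ)..r, g s with hFdef
  set G : ℝ → ℝ := fun r => ∫ s in (1:ℝ)..r, ‖g s‖ with hGdef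
  have hFc : ∀ T, 1 ≤ T → ContinuousOn F (Icc 1 T) := by
    intro T hT r hr
    apply continuousWithinAt_primitive (measure_singleton r)
    rw [min_self, max_eq_right hT]
    exact hgI T hT
  have hGc : ∀ T, 1 ≤ T → ContinuousOn G (Icc 1 T) := by
    intro T hT r hr
    apply continuousWithinAt_primitive (measure_singleton r)
    rw [min_self, max_eq_right hT]
    exact (hgI T hT).norm
  have hFI : ∀ T, 1 ≤ T → IntervalIntegrable F volume 1 T := by
    intro T hT
    apply ContinuousOn.intervalIntegrable
    rw [uIcc_of_le hT]
    exact hFc T hT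
  have hFIxy : ∀ x y, 1 ≤ x → x ≤ y → IntervalIntegrable F volume x y := by
    intro x y hx hxy
    apply ContinuousOn.intervalIntegrable
    apply (hFc y (hx.trans hxy)).mono
    rw [uIcc_of_le hxy]
    exact Set.Icc_subset_Icc hx le_rfl
  have hsg : ∀ x y, 1 ≤ x → 1 ≤ y → IntervalIntegrable (fun s => s * g s) volume x y := by
    intro x y hx hy
    exact (hgI' x y hx hy).continuousOn_mul continuousOn_id
  set φ : ℝ → ℝ :=
    fun r => r * F r - (∫ s in (1:ℝ)..r, F s) - ∫ s in (1:ℝ)..r, s * g s with hφdef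
  have key : ∀ T, 1 ≤ T → ∀ t ∈ Set.Icc 1 T, φ t = φ 1 := by
    intro T hT
    apply constant_of_has_deriv_right_zero
    · -- continuity
      refine ((continuousOn_id.mul (hFc T hT)).sub ?_).sub ?_
      · intro r hr
        apply continuousWithinAt_primitive (measure_singleton r)
        rw [min_self, max_eq_right hT]
        exact hFI T hT
      · intro r hr
        apply continuousWithinAt_primitive (measure_singleton r)
        rw [min_self, max_eq_right hT]
        exact hsg 1 T le_rfl hT
    · -- right derivative zero
      intro x hx
      have hx1 : (1:ℝ) ≤ x := hx.1
      rw [hasDerivWithinAt_iff_isLittleO]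
      simp only [smul_zero, sub_zero]
      rw [Asymptotics.isLittleO_iff]
      intro c hc
      have hc2 : (0:ℝ) < c / 2 := by linarith
      have hcF : ContinuousWithinAt F (Icc 1 (x + 1)) x :=
        hFc (x + 1) (by linarith) x ⟨hx1, by linarith⟩
      have hcG : ContinuousWithinAt G (Icc 1 (x + 1)) x :=
        hGc (x + 1) (by linarith) x ⟨hx1, by linarith⟩
      rw [Metric.continuousWithinAt_iff] at hcF hcG
      obtain ⟨δ₁, hδ₁, hF1⟩ := hcF (c / 2) hc2
      obtain ⟨δ₂, hδ₂, hG1⟩ := hcG (c / 2) hc2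
      set δ : ℝ := min (min δ₁ δ₂) 1 with hδdef
      have hδ : 0 < δ := by positivity
      filter_upwards [self_mem_nhdsWithin,
        mem_nhdsWithin_of_mem_nhds (Iio_mem_nhds (by linarith : x < x + δ))]
        with t' ht1 ht2
      have hxt' : x ≤ t' := ht1
      have ht'δ : t' < x + δ := ht2
      have ht'1 : (1:ℝ) ≤ t' := le_trans hx1 hxt'
      have hδ1 : δ ≤ 1 := min_le_right _ _
      have hδδ₁ : δ ≤ δ₁ := le_trans (min_le_left _ _) (min_le_left _ _)
      have hδδ₂ : δ ≤ δ₂ := le_trans (min_le_left _ _) (min_le_right _ _)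
      -- the difference formula
      have I1 : F t' - F x = ∫ s in x..t', g s :=
        integral_interval_sub_left (hgI t' ht'1) (hgI x hx1)
      have I2 : (∫ s in (1:ℝ)..t', F s) - (∫ s in (1:ℝ)..x, F s) = ∫ s in x..t', F s :=
        integral_interval_sub_left (hFI t' ht'1) (hFI x hx1)
      have I3 : (∫ s in (1:ℝ)..t', s * g s) - (∫ s in (1:ℝ)..x, s * g s)
          = ∫ s in x..t', s * g s :=
        integral_interval_sub_left (hsg 1 t' le_rfl ht'1) (hsg 1 x le_rfl hx1)
      have J1 : ∫ s in x..t', (t' - s) * g s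
          = t' * (∫ s in x..t', g s) - ∫ s in x..t', s * g s := by
        simp_rw [sub_mul]
        rw [intervalIntegral.integral_sub ((hgI' x t' hx1 ht'1).const_mul t')
          (hsg x t' hx1 ht'1), intervalIntegral.integral_const_mul]
      have J2 : ∫ s in x..t', (F x - F s) = (t' - x) * F x - ∫ s in x..t', F s := by
        rw [intervalIntegral.integral_sub intervalIntegrable_const (hFIxy x t' hx1 hxt'),
          intervalIntegral.integral_const, smul_eq_mul]
      have E : φ t' - φ x
          = (∫ s in x..t', (F x - F s)) + ∫ s in x..t', (t' - s) * g s := by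
        simp only [hφdef]
        rw [J1, J2]
        have hFt' : F t' = F x + ∫ s in x..t', g s := by linarith
        rw [hFt']
        linarith [I2, I3]
      -- bounds
      have B1 : ‖∫ s in x..t', (F x - F s)‖ ≤ (c / 2) * (t' - x) := by
        have hb : ∀ s ∈ Set.uIoc x t', ‖F x - F s‖ ≤ c / 2 := by
          intro s hs
          rw [uIoc_of_le hxt'] at hs
          have hs1 : s ∈ Set.Icc 1 (x + 1) := ⟨le_trans hx1 hs.1.le, by nlinarith [hs.2]⟩
          have hds : dist s x < δ₁ := by
            rw [Real.dist_eq, abs_of_pos (by linarith [hs.1])]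
            have := hs.2
            linarith
          have := hF1 hs1 hds
          rw [Real.dist_eq] at this
          rw [Real.norm_eq_abs, abs_sub_comm]
          exact this.le
        calc ‖∫ s in x..t', (F x - F s)‖ ≤ (c / 2) * |t' - x| :=
          intervalIntegral.norm_integral_le_of_norm_le_const hb
        _ = (c / 2) * (t' - x) := by rw [abs_of_nonneg (by linarith)]
      have B2 : ‖∫ s in x..t', (t' - s) * g s‖ ≤ (t' - x) * (c / 2) := by
        have hGd : G t' - G x = ∫ s in x..t', ‖g s‖ :=
          integral_interval_sub_left (hgI t' ht'1).norm (hgI x hx1).norm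
        have hGnn : 0 ≤ G t' - G x := by
          rw [hGd]
          apply intervalIntegral.integral_nonneg hxt'
          intro s _; exact norm_nonneg _
        have hGsmall : G t' - G x ≤ c / 2 := by
          have ht'mem : t' ∈ Set.Icc 1 (x + 1) := ⟨ht'1, by linarith⟩
          have hdt : dist t' x < δ₂ := by
            rw [Real.dist_eq, abs_of_nonneg (by linarith)]
            linarith
          have := hG1 ht'mem hdt
          rw [Real.dist_eq] at this
          calc G t' - G x ≤ |G t' - G x| := le_abs_self _
          _ ≤ c / 2 := this.le
        calc ‖∫ s in x..t', (t' - s) * g s‖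
            ≤ ∫ s in x..t', ‖(t' - s) * g s‖ :=
          intervalIntegral.norm_integral_le_integral_norm hxt'
        _ ≤ ∫ s in x..t', (t' - x) * ‖g s‖ := by
            apply intervalIntegral.integral_mono_on hxt'
              ((hgI' x t' hx1 ht'1).continuousOn_mul (by fun_prop)).norm
              ((hgI' x t' hx1 ht'1).norm.const_mul (t' - x))
            intro s hs
            rw [Real.norm_eq_abs, Real.norm_eq_abs, abs_mul]
            apply mul_le_mul_of_nonneg_right _ (abs_nonneg _)
            rw [abs_of_nonneg (by linarith [hs.2])]
            linarith [hs.1]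
        _ = (t' - x) * (G t' - G x) := by
            rw [intervalIntegral.integral_const_mul, hGd]
        _ ≤ (t' - x) * (c / 2) := mul_le_mul_of_nonneg_left hGsmall (by linarith)
      rw [E]
      calc ‖(∫ s in x..t', (F x - F s)) + ∫ s in x..t', (t' - s) * g s‖
          ≤ ‖∫ s in x..t', (F x - F s)‖ + ‖∫ s in x..t', (t' - s) * g s‖ := norm_add_le _ _
      _ ≤ (c / 2) * (t' - x) + (t' - x) * (c / 2) := add_le_add B1 B2
      _ = c * (t' - x) := by ring
      _ = c * ‖t' - x‖ := by rw [Real.norm_eq_abs, abs_of_nonneg (by linarith)]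
  intro t ht
  have h0 : φ t = φ 1 := key t ht t ⟨ht, le_rfl⟩
  have h1 : φ 1 = 0 := by
    simp only [hφdef, hFdef]
    rw [intervalIntegral.integral_same, intervalIntegral.integral_same,
      intervalIntegral.integral_same]
    ring
  have h2 : φ t = 0 := h0.trans h1
  simp only [hφdef, hFdef] at h2
  linarith

lemma aux_KI {g : ℝ → ℝ} {z1 : ℝ} {zf P : ℝ → ℝ}
    (hgI : ∀ T, 1 ≤ T → IntervalIntegrable g volume 1 T)
    (hsol : ∀ s, 1 ≤ s → zf s = z1 + ∫ u in (1:ℝ)..s, g u)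
    (hP : ∀ s, 1 ≤ s → P s = zf s + s * g s) :
    ∀ t, 1 ≤ t → t * zf t = z1 + ∫ s in (1:ℝ)..t, P s := by
  intro t ht
  set F : ℝ → ℝ := fun r => ∫ s in (1:ℝ)..r, g s with hFdef
  have hFc : ContinuousOn F (Set.Icc 1 t) := by
    intro r hr
    apply continuousWithinAt_primitive (measure_singleton r)
    rw [min_self, max_eq_right ht]
    exact hgI t ht
  have hFI : IntervalIntegrable F volume 1 t := by
    apply ContinuousOn.intervalIntegrable
    rw [uIcc_of_le ht]
    exact hFc
  have hsgI : IntervalIntegrable (fun s => s * g s) volume 1 t :=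
    (hgI t ht).continuousOn_mul continuousOn_id
  have hcongr : ∫ s in (1:ℝ)..t, P s = ∫ s in (1:ℝ)..t, ((z1 + F s) + s * g s) := by
    apply intervalIntegral.integral_congr
    intro s hs
    rw [uIcc_of_le ht] at hs
    rw [hP s hs.1, hsol s hs.1]
  have hsplit : ∫ s in (1:ℝ)..t, ((z1 + F s) + s * g s)
      = ((t - 1) * z1 + ∫ s in (1:ℝ)..t, F s) + ∫ s in (1:ℝ)..t, s * g s := by
    rw [intervalIntegral.integral_add (intervalIntegrable_const.add hFI) hsgI,
      intervalIntegral.integral_add intervalIntegrable_const hFI,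
      intervalIntegral.integral_const, smul_eq_mul]
  have hparts := aux_parts hgI t ht
  have hz : zf t = z1 + F t := hsol t ht
  rw [hcongr, hsplit, hz]
  have : t * F t = (∫ s in (1:ℝ)..t, F s) + ∫ s in (1:ℝ)..t, s * g s := hparts
  ring_nf
  ring_nf at this
  linarith

lemma aux_intInt_sum {ι : Type*} (s : Finset ι) {f : ι → ℝ → ℝ} {x y : ℝ}
    (h : ∀ i ∈ s, IntervalIntegrable (f i) volume x y) :
    IntervalIntegrable (fun t => ∑ i ∈ s, f i t) volume x y := by
  have h2 := IntervalIntegrable.sum s h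
  rwa [Finset.sum_fn] at h2

/-- unilateral no-regret property of continuous fictitious play: if only player 1
plays best replies (no assumption on q₂), player 1's maximal regret converges to 0. -/
theorem stmt_10 {A1 A2 : Type*} [Fintype A1] [Fintype A2] [Nonempty A1] [Nonempty A2]
    (u1 : A1 → A2 → ℝ)
    (z : ℝ → A1 → A2 → ℝ) (q1 : ℝ → A1 → ℝ) (q2 : ℝ → A2 → ℝ)
    (hz : ∀ t ≥ (1:ℝ), (∀ a b, 0 ≤ z t a b) ∧ ∑ a, ∑ b, z t a b = 1)
    (hq1prob : ∀ t ≥ (1:ℝ), (∀ a, 0 ≤ q1 t a) ∧ ∑ a, q1 t a = 1)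
    (hq2prob : ∀ t ≥ (1:ℝ), (∀ b, 0 ≤ q2 t b) ∧ ∑ b, q2 t b = 1)
    -- q1(t) is a mixed best reply of player 1 to the marginal z₂(t); nothing is assumed on q₂
    (hbr1 : ∀ t ≥ (1:ℝ), ∑ a, q1 t a * (∑ b, (∑ a', z t a' b) * u1 a b)
        = Finset.univ.sup' Finset.univ_nonempty (fun k => ∑ b, (∑ a', z t a' b) * u1 k b))
    -- absolutely continuous solution of ż(t) = (1/t)(q₁(t) ⊗ q₂(t) − z(t)), integral form
    (hint : ∀ a b, ∀ t ≥ (1:ℝ), IntervalIntegrable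
      (fun s => (1 / s) * (q1 s a * q2 s b - z s a b)) volume 1 t)
    (hsol : ∀ t ≥ (1:ℝ), ∀ a b,
      z t a b = z 1 a b + ∫ s in (1:ℝ)..t, (1 / s) * (q1 s a * q2 s b - z s a b)) :
    Tendsto (fun t =>
      Finset.univ.sup' Finset.univ_nonempty (fun k => ∑ b, (∑ a', z t a' b) * u1 k b)
        - ∑ a, ∑ b, z t a b * u1 a b) atTop (nhds 0) := by
  classical
  -- basic bounds
  have hq1nn : ∀ s, 1 ≤ s → ∀ a, 0 ≤ q1 s a := fun s hs => (hq1prob s hs).1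
  have hq2nn : ∀ s, 1 ≤ s → ∀ b, 0 ≤ q2 s b := fun s hs => (hq2prob s hs).1
  have hq1sum : ∀ s, 1 ≤ s → ∑ a, q1 s a = 1 := fun s hs => (hq1prob s hs).2
  have hq2sum : ∀ s, 1 ≤ s → ∑ b, q2 s b = 1 := fun s hs => (hq2prob s hs).2
  have hq1le : ∀ s, 1 ≤ s → ∀ a, q1 s a ≤ 1 := by
    intro s hs a
    rw [← hq1sum s hs]
    exact Finset.single_le_sum (fun i _ => hq1nn s hs i) (Finset.mem_univ a)
  have hq2le : ∀ s, 1 ≤ s → ∀ b, q2 s b ≤ 1 := by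
    intro s hs b
    rw [← hq2sum s hs]
    exact Finset.single_le_sum (fun i _ => hq2nn s hs i) (Finset.mem_univ b)
  -- the product kernel, cut off below 1
  set Q : A1 → A2 → ℝ → ℝ :=
    fun a b => Set.indicator (Set.Ici 1) (fun s => q1 s a * q2 s b) with hQdef
  have hQ0 : ∀ a b s, 0 ≤ Q a b s := by
    intro a b s
    by_cases hs : (1:ℝ) ≤ s
    · rw [hQdef]
      simp only [Set.indicator_of_mem (Set.mem_Ici.2 hs)]
      exact mul_nonneg (hq1nn s hs a) (hq2nn s hs b)
    · rw [hQdef]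
      simp only [Set.indicator_of_notMem (fun h => hs (Set.mem_Ici.1 h))]
      exact le_refl 0
  have hQ1 : ∀ a b s, Q a b s ≤ 1 := by
    intro a b s
    by_cases hs : (1:ℝ) ≤ s
    · rw [hQdef]
      simp only [Set.indicator_of_mem (Set.mem_Ici.2 hs)]
      nlinarith [hq1nn s hs a, hq2nn s hs b, hq1le s hs a, hq2le s hs b]
    · rw [hQdef]
      simp only [Set.indicator_of_notMem (fun h => hs (Set.mem_Ici.1 h))]
      norm_num
  have hQsum : ∀ b s, 0 ≤ (∑ a, Q a b s) ∧ (∑ a, Q a b s) ≤ 1 := by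
    intro b s
    by_cases hs : (1:ℝ) ≤ s
    · have : ∑ a, Q a b s = q2 s b := by
        rw [hQdef]
        simp only [Set.indicator_of_mem (Set.mem_Ici.2 hs)]
        rw [← Finset.sum_mul, hq1sum s hs, one_mul]
      rw [this]
      exact ⟨hq2nn s hs b, hq2le s hs b⟩
    · have : ∑ a, Q a b s = 0 := by
        apply Finset.sum_eq_zero
        intro a _
        rw [hQdef]
        simp only [Set.indicator_of_notMem (fun h => hs (Set.mem_Ici.1 h))]
      rw [this]
      norm_num
  -- measurability of Q
  have hQm : ∀ a b, AEStronglyMeasurable (Q a b) volume := by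
    intro a b
    rw [hQdef]
    rw [aestronglyMeasurable_indicator_iff measurableSet_Ici]
    rw [← Measure.restrict_congr_set Ioi_ae_eq_Ici]
    have hU : Set.Ioi (1:ℝ) = ⋃ n : ℕ, Set.Ioc (1:ℝ) (n + 2) := by
      ext r
      simp only [Set.mem_Ioi, Set.mem_iUnion, Set.mem_Ioc]
      constructor
      · intro hr
        obtain ⟨n, hn⟩ := exists_nat_ge r
        exact ⟨n, hr, by push_cast; linarith⟩
      · rintro ⟨n, h1, -⟩
        exact h1
    rw [hU, aestronglyMeasurable_iUnion_iff]
    intro n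
    set T : ℝ := (n:ℝ) + 2 with hTdef
    have hT : (1:ℝ) ≤ T := by rw [hTdef]; have : (0:ℝ) ≤ (n:ℝ) := Nat.cast_nonneg n; linarith
    set g : ℝ → ℝ := fun s => (1 / s) * (q1 s a * q2 s b - z s a b) with hgdef
    have hgm : AEStronglyMeasurable g (volume.restrict (Set.Ioc 1 T)) :=
      ((intervalIntegrable_iff_integrableOn_Ioc_of_le hT).1 (hint a b T hT)).aestronglyMeasurable
    have hFc : ContinuousOn (fun r => ∫ s in (1:ℝ)..r, g s) (Set.Icc 1 T) := by
      intro r hr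
      apply continuousWithinAt_primitive (measure_singleton r)
      rw [min_self, max_eq_right hT]
      exact hint a b T hT
    have hzm : AEStronglyMeasurable (fun s => z s a b) (volume.restrict (Set.Ioc 1 T)) := by
      apply AEStronglyMeasurable.congr
        (f := fun s => z 1 a b + ∫ u in (1:ℝ)..s, g u)
      · exact (aestronglyMeasurable_const.add
          ((hFc.aestronglyMeasurable measurableSet_Icc).mono_measure
            (Measure.restrict_mono Set.Ioc_subset_Icc_self le_rfl)))
      · rw [Filter.EventuallyEq, ae_restrict_iff' measurableSet_Ioc]
        apply ae_of_all
        intro s hs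
        exact (hsol s hs.1.le a b).symm
    apply AEStronglyMeasurable.congr
      (f := fun s => z s a b + s * g s)
    · exact hzm.add ((continuous_id.aestronglyMeasurable.restrict).mul hgm)
    · rw [Filter.EventuallyEq, ae_restrict_iff' measurableSet_Ioc]
      apply ae_of_all
      intro s hs
      have hs0 : s ≠ 0 := by have := hs.1; intro h; rw [h] at this; linarith
      rw [hgdef]
      field_simp
      ring
  have hQint : ∀ a b x y, IntervalIntegrable (Q a b) volume x y := by
    intro a b x y
    apply aux_intInt (hQm a b) (C := 1) _ x y
    intro s
    rw [abs_of_nonneg (hQ0 a b s)]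
    exact hQ1 a b s
  -- the key identity
  have KI : ∀ a b, ∀ t, 1 ≤ t → t * z t a b = z 1 a b + ∫ s in (1:ℝ)..t, Q a b s := by
    intro a b
    apply aux_KI (g := fun s => (1 / s) * (q1 s a * q2 s b - z s a b))
    · exact fun T hT => hint a b T hT
    · exact fun s hs => hsol s hs a b
    · intro s hs
      have hs0 : s ≠ 0 := by intro h; rw [h] at hs; linarith
      rw [hQdef]
      simp only [Set.indicator_of_mem (Set.mem_Ici.2 hs)]
      field_simp
      ring
  -- integrands for the primitives
  set E1 : A1 → ℝ → ℝ := fun k s => ∑ b, (∑ a, Q a b s) * u1 k b with hE1def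
  set EE : ℝ → ℝ := fun s => ∑ a, ∑ b, Q a b s * u1 a b with hEEdef
  set C : ℝ := ∑ a, ∑ b, |u1 a b| with hCdef
  have hCnn : 0 ≤ C := Finset.sum_nonneg fun a _ => Finset.sum_nonneg fun b _ => abs_nonneg _
  have hE1m : ∀ k, AEStronglyMeasurable (E1 k) volume := by
    intro k
    apply Finset.aestronglyMeasurable_fun_sum
    intro b _
    exact (Finset.aestronglyMeasurable_fun_sum _ fun a _ => hQm a b).mul_const _
  have hEEm : AEStronglyMeasurable EE volume := by
    apply Finset.aestronglyMeasurable_fun_sum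
    intro a _
    apply Finset.aestronglyMeasurable_fun_sum
    intro b _
    exact (hQm a b).mul_const _
  have hE1bd : ∀ k s, |E1 k s| ≤ C := by
    intro k s
    calc |E1 k s| ≤ ∑ b, |(∑ a, Q a b s) * u1 k b| := Finset.abs_sum_le_sum_abs _ _
    _ ≤ ∑ b, |u1 k b| := by
        apply Finset.sum_le_sum
        intro b _
        rw [abs_mul]
        apply mul_le_of_le_one_left (abs_nonneg _)
        rw [abs_of_nonneg (hQsum b s).1]
        exact (hQsum b s).2
    _ ≤ C := by
        rw [hCdef]
        exact Finset.single_le_sum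
          (f := fun a => ∑ b, |u1 a b|)
          (fun i _ => Finset.sum_nonneg fun b _ => abs_nonneg _) (Finset.mem_univ k)
  have hEEbd : ∀ s, |EE s| ≤ C := by
    intro s
    calc |EE s| ≤ ∑ a, |∑ b, Q a b s * u1 a b| := Finset.abs_sum_le_sum_abs _ _
    _ ≤ C := by
        rw [hCdef]
        apply Finset.sum_le_sum
        intro a _
        calc |∑ b, Q a b s * u1 a b| ≤ ∑ b, |Q a b s * u1 a b| := Finset.abs_sum_le_sum_abs _ _
        _ ≤ ∑ b, |u1 a b| := by
            apply Finset.sum_le_sum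
            intro b _
            rw [abs_mul]
            apply mul_le_of_le_one_left (abs_nonneg _)
            rw [abs_of_nonneg (hQ0 a b s)]
            exact hQ1 a b s
  have hE1int : ∀ k x y, IntervalIntegrable (E1 k) volume x y :=
    fun k x y => aux_intInt (hE1m k) (hE1bd k) x y
  have hEEint : ∀ x y, IntervalIntegrable EE volume x y :=
    fun x y => aux_intInt hEEm hEEbd x y
  -- the main objects
  set cA : A1 → ℝ := fun k => ∑ b, (∑ a, z 1 a b) * u1 k b with hcAdef
  set Af : A1 → ℝ → ℝ := fun k t => cA k + ∫ s in (1:ℝ)..t, E1 k s with hAfdef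
  set cB : ℝ := ∑ a, ∑ b, z 1 a b * u1 a b with hcBdef
  set Bf : ℝ → ℝ := fun t => cB + ∫ s in (1:ℝ)..t, EE s with hBfdef
  set M : ℝ → ℝ := fun t => Finset.univ.sup' Finset.univ_nonempty (fun k => Af k t) with hMdef
  set D : ℝ → ℝ := fun t => M t - Bf t with hDdef
  -- identities relating Af, Bf to the payoff functions
  have hAft : ∀ t, 1 ≤ t → ∀ k, Af k t = t * (∑ b, (∑ a', z t a' b) * u1 k b) := by
    intro t ht k
    have hz2 : ∀ b : A2, t * (∑ a', z t a' b)
        = (∑ a', z 1 a' b) + ∫ s in (1:ℝ)..t, (∑ a', Q a' b s) := by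
      intro b
      rw [Finset.mul_sum, intervalIntegral.integral_finset_sum (fun a _ => hQint a b 1 t),
        ← Finset.sum_add_distrib]
      exact Finset.sum_congr rfl fun a' _ => KI a' b t ht
    have hQbint : ∀ b : A2, IntervalIntegrable (fun s => ∑ a, Q a b s) volume 1 t :=
      fun b => aux_intInt_sum _ (fun a _ => hQint a b 1 t)
    symm
    calc t * (∑ b, (∑ a', z t a' b) * u1 k b)
        = ∑ b, (t * (∑ a', z t a' b)) * u1 k b := by
          rw [Finset.mul_sum]; exact Finset.sum_congr rfl fun b _ => by ring
    _ = ∑ b, ((∑ a', z 1 a' b) + ∫ s in (1:ℝ)..t, (∑ a', Q a' b s)) * u1 k b :=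
          Finset.sum_congr rfl fun b _ => by rw [hz2 b]
    _ = (∑ b, (∑ a', z 1 a' b) * u1 k b)
          + ∑ b, (∫ s in (1:ℝ)..t, (∑ a', Q a' b s)) * u1 k b := by
          rw [← Finset.sum_add_distrib]
          exact Finset.sum_congr rfl fun b _ => by ring
    _ = cA k + ∫ s in (1:ℝ)..t, E1 k s := by
          congr 1
          calc ∑ b, (∫ s in (1:ℝ)..t, (∑ a', Q a' b s)) * u1 k b
              = ∑ b, ∫ s in (1:ℝ)..t, (∑ a', Q a' b s) * u1 k b :=
                Finset.sum_congr rfl fun b _ =>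
                  (intervalIntegral.integral_mul_const (u1 k b) _).symm
          _ = ∫ s in (1:ℝ)..t, ∑ b, (∑ a', Q a' b s) * u1 k b :=
                (intervalIntegral.integral_finset_sum
                  (fun b _ => (hQbint b).mul_const (u1 k b))).symm
          _ = ∫ s in (1:ℝ)..t, E1 k s := rfl
    _ = Af k t := by rw [hAfdef]
  have hBft : ∀ t, 1 ≤ t → Bf t = t * (∑ a, ∑ b, z t a b * u1 a b) := by
    intro t ht
    symm
    calc t * (∑ a, ∑ b, z t a b * u1 a b)
        = ∑ a, ∑ b, ((t * z t a b) * u1 a b) := by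
          rw [Finset.mul_sum]
          refine Finset.sum_congr rfl fun a _ => ?_
          rw [Finset.mul_sum]
          exact Finset.sum_congr rfl fun b _ => by ring
    _ = ∑ a, ∑ b, (z 1 a b * u1 a b + (∫ s in (1:ℝ)..t, Q a b s) * u1 a b) := by
          refine Finset.sum_congr rfl fun a _ => Finset.sum_congr rfl fun b _ => ?_
          rw [KI a b t ht]
          ring
    _ = cB + ∑ a, ∑ b, (∫ s in (1:ℝ)..t, Q a b s) * u1 a b := by
          simp only [Finset.sum_add_distrib, hcBdef]
    _ = cB + ∫ s in (1:ℝ)..t, EE s := by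
          congr 1
          calc ∑ a, ∑ b, (∫ s in (1:ℝ)..t, Q a b s) * u1 a b
              = ∑ a, ∑ b, ∫ s in (1:ℝ)..t, Q a b s * u1 a b :=
                Finset.sum_congr rfl fun a _ => Finset.sum_congr rfl fun b _ =>
                  (intervalIntegral.integral_mul_const (u1 a b) _).symm
          _ = ∑ a, ∫ s in (1:ℝ)..t, ∑ b, Q a b s * u1 a b :=
                Finset.sum_congr rfl fun a _ =>
                  (intervalIntegral.integral_finset_sum
                    (fun b _ => (hQint a b 1 t).mul_const (u1 a b))).symm
          _ = ∫ s in (1:ℝ)..t, ∑ a, ∑ b, Q a b s * u1 a b :=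
                (intervalIntegral.integral_finset_sum
                  (fun a _ => aux_intInt_sum _
                    (fun b _ => (hQint a b 1 t).mul_const (u1 a b)))).symm
          _ = ∫ s in (1:ℝ)..t, EE s := rfl
    _ = Bf t := by rw [hBfdef]
  have hMt : ∀ t, 1 ≤ t → M t = t * Finset.univ.sup' Finset.univ_nonempty
      (fun k => ∑ b, (∑ a', z t a' b) * u1 k b) := by
    intro t ht
    rw [hMdef, ← aux_sup_mul _ (by linarith : (0:ℝ) ≤ t)]
    exact Finset.sup'_congr _ rfl fun k _ => hAft t ht k
  have hbr' : ∀ t, 1 ≤ t → ∑ a, q1 t a * Af a t = M t := by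
    intro t ht
    calc ∑ a, q1 t a * Af a t
        = ∑ a, q1 t a * (t * (∑ b, (∑ a', z t a' b) * u1 a b)) :=
          Finset.sum_congr rfl fun a _ => by rw [hAft t ht a]
    _ = t * ∑ a, q1 t a * (∑ b, (∑ a', z t a' b) * u1 a b) := by
          rw [Finset.mul_sum]
          exact Finset.sum_congr rfl fun a _ => by ring
    _ = t * Finset.univ.sup' Finset.univ_nonempty
          (fun k => ∑ b, (∑ a', z t a' b) * u1 k b) := by rw [hbr1 t ht]
    _ = M t := (hMt t ht).symm
  -- difference formulas and Lipschitz bounds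
  have hAd : ∀ k x y, Af k y - Af k x = ∫ s in x..y, E1 k s := by
    intro k x y
    simp only [hAfdef]
    have h := integral_interval_sub_left (hE1int k 1 y) (hE1int k 1 x)
    linarith
  have hBd : ∀ x y, Bf y - Bf x = ∫ s in x..y, EE s := by
    intro x y
    simp only [hBfdef]
    have h := integral_interval_sub_left (hEEint 1 y) (hEEint 1 x)
    linarith
  have hAlip : ∀ k x y, |Af k y - Af k x| ≤ C * |y - x| := by
    intro k x y
    rw [hAd k x y]
    have h := intervalIntegral.norm_integral_le_of_norm_le_const (C := C) (a := x) (b := y)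
      (f := E1 k) (fun s _ => by rw [Real.norm_eq_abs]; exact hE1bd k s)
    rwa [Real.norm_eq_abs] at h
  have hBlip : ∀ x y, |Bf y - Bf x| ≤ C * |y - x| := by
    intro x y
    rw [hBd x y]
    have h := intervalIntegral.norm_integral_le_of_norm_le_const (C := C) (a := x) (b := y)
      (f := EE) (fun s _ => by rw [Real.norm_eq_abs]; exact hEEbd s)
    rwa [Real.norm_eq_abs] at h
  have hMkey : ∀ u v : ℝ, M u ≤ M v + C * |u - v| := by
    intro u v
    have hk : ∀ k, Af k u ≤ M v + C * |u - v| := by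
      intro k
      have h1 := hAlip k v u
      have h2 := le_abs_self (Af k u - Af k v)
      have h3 : Af k v ≤ M v := Finset.le_sup' (fun k => Af k v) (Finset.mem_univ k)
      linarith
    calc M u = Finset.univ.sup' Finset.univ_nonempty (fun k => Af k u) := rfl
    _ ≤ M v + C * |u - v| := Finset.sup'_le _ _ fun k _ => hk k
  have hMlip : ∀ x y, |M y - M x| ≤ C * |y - x| := by
    intro x y
    rw [abs_sub_le_iff]
    constructor
    · have := hMkey y x
      linarith
    · have := hMkey x y
      rw [abs_sub_comm] at this
      linarith
  have hMlipW : LipschitzWith (Real.toNNReal C) M := by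
    apply LipschitzWith.of_dist_le_mul
    intro x y
    rw [Real.dist_eq, Real.dist_eq, Real.coe_toNNReal C hCnn]
    exact hMlip y x
  have hDlip : LipschitzWith (Real.toNNReal (2 * C)) D := by
    apply LipschitzWith.of_dist_le_mul
    intro x y
    rw [Real.dist_eq, Real.dist_eq, Real.coe_toNNReal _ (by linarith : 0 ≤ 2 * C)]
    have he : D x - D y = (M x - M y) + (Bf y - Bf x) := by simp only [hDdef]; ring
    have h1 : |D x - D y| ≤ |M x - M y| + |Bf y - Bf x| := by
      rw [he]; exact abs_add_le _ _
    have h2 := hMlip y x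
    have h3 := hBlip x y
    rw [abs_sub_comm y x] at h3
    linarith
  -- a.e. derivatives
  have hAe : ∀ᵐ x : ℝ, ∀ k, HasDerivAt (fun t => ∫ s in (1:ℝ)..t, E1 k s) (E1 k x) x :=
    ae_all_iff.2 fun k => aux_ae_hasDerivAt (hE1m k) (hE1bd k)
  have hBe : ∀ᵐ x : ℝ, HasDerivAt (fun t => ∫ s in (1:ℝ)..t, EE s) (EE x) x :=
    aux_ae_hasDerivAt hEEm hEEbd
  have hMdiff : ∀ᵐ x : ℝ, DifferentiableAt ℝ M x := hMlipW.ae_differentiableAt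
  have hne1 : ∀ᵐ x : ℝ, x ≠ 1 := by
    have hset : {x : ℝ | ¬ x ≠ 1} = {1} := by ext r; simp
    rw [ae_iff, hset]
    exact measure_singleton 1
  have hDae : ∀ᵐ x : ℝ, HasDerivAt D 0 x := by
    filter_upwards [hAe, hBe, hMdiff, hne1] with x hA hB hMd hx1
    have hAfd : ∀ k, HasDerivAt (Af k) (E1 k x) x := fun k => (hA k).const_add (cA k)
    have hBfd : HasDerivAt Bf (EE x) x := hB.const_add cB
    rcases lt_or_gt_of_ne hx1 with hlt | hgt
    · -- x < 1 : everything is locally constant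
      have hE1z : ∀ k s, s < 1 → E1 k s = 0 := by
        intro k s hs
        simp only [hE1def]
        apply Finset.sum_eq_zero
        intro b _
        have hzsum : ∑ a, Q a b s = 0 := Finset.sum_eq_zero fun a _ => by
          rw [hQdef]
          simp only [Set.indicator_of_notMem
            (fun h => absurd (Set.mem_Ici.1 h) (not_le.2 hs))]
        rw [hzsum, zero_mul]
      have hEEz : ∀ s, s < 1 → EE s = 0 := by
        intro s hs
        simp only [hEEdef]
        apply Finset.sum_eq_zero
        intro a _
        apply Finset.sum_eq_zero
        intro b _
        rw [hQdef]
        simp only [Set.indicator_of_notMem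
          (fun h => absurd (Set.mem_Ici.1 h) (not_le.2 hs))]
        rw [zero_mul]
      have hconstA : ∀ k, ∀ y, y < 1 → Af k y = Af k x := by
        intro k y hy
        have hd := hAd k x y
        have hzint : ∫ s in x..y, E1 k s = 0 := by
          rw [intervalIntegral.integral_congr (g := fun _ => (0:ℝ))
            (fun s hs => hE1z k s (lt_of_le_of_lt (hs.2.trans (max_le hlt.le hy.le)) one_lt_two |> fun _ => by
              have h1 := hs.2
              have h2 : max x y < 1 := max_lt hlt hy
              linarith))]
          simp
        linarith
      have hconstB : ∀ y, y < 1 → Bf y = Bf x := by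
        intro y hy
        have hd := hBd x y
        have hzint : ∫ s in x..y, EE s = 0 := by
          rw [intervalIntegral.integral_congr (g := fun _ => (0:ℝ))
            (fun s hs => by
              have h1 := hs.2
              have h2 : max x y < 1 := max_lt hlt hy
              exact hEEz s (by linarith))]
          simp
        linarith
      have hev : D =ᶠ[𝓝 x] fun _ => D x := by
        filter_upwards [Iio_mem_nhds hlt] with y hy
        have hMy : M y = M x :=
          Finset.sup'_congr _ rfl fun k _ => hconstA k y hy
        have hBy : Bf y = Bf x := hconstB y hy
        simp only [hDdef]
        rw [hMy, hBy]
      exact (hasDerivAt_const x (D x)).congr_of_eventuallyEq hev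
    · -- x > 1 : the envelope argument
      have hx1' : (1:ℝ) ≤ x := hgt.le
      have hMA : ∑ a, q1 x a * Af a x = M x := hbr' x hx1'
      have hAleM : ∀ a, Af a x ≤ M x :=
        fun a => Finset.le_sup' (fun k => Af k x) (Finset.mem_univ a)
      have hsupp : ∀ a, 0 < q1 x a → Af a x = M x := by
        intro a ha
        have hzero : ∑ a', q1 x a' * (M x - Af a' x) = 0 := by
          have hexp : ∑ a', q1 x a' * (M x - Af a' x)
              = (∑ a', q1 x a') * M x - ∑ a', q1 x a' * Af a' x := by
            rw [Finset.sum_mul, ← Finset.sum_sub_distrib]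
            exact Finset.sum_congr rfl fun a' _ => by ring
          rw [hexp, hq1sum x hx1', one_mul, hMA]
          ring
        have hterm := (Finset.sum_eq_zero_iff_of_nonneg
          (fun a' _ => mul_nonneg (hq1nn x hx1' a') (by linarith [hAleM a']))).1 hzero
          a (Finset.mem_univ a)
        rcases mul_eq_zero.1 hterm with h | h
        · exact absurd h (ne_of_gt ha)
        · linarith
      have hMd' : HasDerivAt M (deriv M x) x := hMd.hasDerivAt
      have hderivM : ∀ a, 0 < q1 x a → deriv M x = E1 a x := by
        intro a ha
        have hmin : IsLocalMin (fun t => M t - Af a t) x := by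
          apply Filter.Eventually.of_forall
          intro y
          have h1 : Af a y ≤ M y := Finset.le_sup' (fun k => Af k y) (Finset.mem_univ a)
          have h2 : Af a x = M x := hsupp a ha
          simp only
          linarith
        have hdh : HasDerivAt (fun t => M t - Af a t) (deriv M x - E1 a x) x :=
          hMd'.sub (hAfd a)
        have hd0 := hmin.deriv_eq_zero
        rw [hdh.deriv] at hd0
        linarith
      have hEEx : EE x = ∑ a, q1 x a * E1 a x := by
        have hQx : ∀ (a : A1) (b : A2), Q a b x = q1 x a * q2 x b := fun a b => by
          rw [hQdef]
          simp only [Set.indicator_of_mem (Set.mem_Ici.2 hx1')]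
        have hQsx : ∀ b : A2, ∑ a, Q a b x = q2 x b := by
          intro b
          rw [Finset.sum_congr rfl fun a _ => hQx a b, ← Finset.sum_mul, hq1sum x hx1', one_mul]
        simp only [hEEdef, hE1def]
        calc ∑ a, ∑ b, Q a b x * u1 a b
            = ∑ a, ∑ b, (q1 x a * q2 x b) * u1 a b :=
              Finset.sum_congr rfl fun a _ => Finset.sum_congr rfl fun b _ => by rw [hQx a b]
        _ = ∑ a, q1 x a * ∑ b, q2 x b * u1 a b := by
              refine Finset.sum_congr rfl fun a _ => ?_
              rw [Finset.mul_sum]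
              exact Finset.sum_congr rfl fun b _ => by ring
        _ = ∑ a, q1 x a * ∑ b, (∑ a', Q a' b x) * u1 a b := by
              refine Finset.sum_congr rfl fun a _ => ?_
              congr 1
              exact Finset.sum_congr rfl fun b _ => by rw [hQsx b]
      have hDd : HasDerivAt D (deriv M x - EE x) x := hMd'.sub hBfd
      have hzero : deriv M x - EE x = 0 := by
        have hexp : ∑ a, q1 x a * (deriv M x - E1 a x)
            = (∑ a, q1 x a) * deriv M x - ∑ a, q1 x a * E1 a x := by
          rw [Finset.sum_mul, ← Finset.sum_sub_distrib]
          exact Finset.sum_congr rfl fun a _ => by ring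
        have hz2 : ∑ a, q1 x a * (deriv M x - E1 a x) = 0 := by
          apply Finset.sum_eq_zero
          intro a _
          rcases eq_or_lt_of_le (hq1nn x hx1' a) with h | h
          · rw [← h, zero_mul]
          · rw [hderivM a h]; ring
        rw [hexp, hq1sum x hx1', one_mul, ← hEEx] at hz2
        exact hz2
      rw [hzero] at hDd
      exact hDd
  -- D is constant, and the regret equals D 1 / t
  have hDconst : ∀ t, D t = D 1 := fun t => aux_const hDlip hDae t 1
  have hexpr : ∀ t : ℝ, 1 ≤ t →
      (Finset.univ.sup' Finset.univ_nonempty (fun k => ∑ b, (∑ a', z t a' b) * u1 k b)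
        - ∑ a, ∑ b, z t a b * u1 a b) = D 1 / t := by
    intro t ht
    have ht0 : t ≠ 0 := by intro h; rw [h] at ht; linarith
    have h1 : t * (Finset.univ.sup' Finset.univ_nonempty
        (fun k => ∑ b, (∑ a', z t a' b) * u1 k b) - ∑ a, ∑ b, z t a b * u1 a b) = D t := by
      rw [mul_sub, ← hMt t ht, ← hBft t ht]
    rw [← hDconst t, ← h1]
    field_simp
  have htend : Tendsto (fun t : ℝ => D 1 / t) atTop (𝓝 0) :=
    tendsto_const_nhds.div_atTop tendsto_id
  apply htend.congr'
  filter_upwards [eventually_ge_atTop (1:ℝ)] with t ht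
  exact (hexpr t ht).symm
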